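/- Let $I$ be a compact interval and $f, g : I \to \mathbb{R}$ be continuous and strictly monotone. Then the function $d_{f,g}(t) := \sup \{ |\mathscr{A}_f(\mathbb{P}) - \mathscr{A}_g(\mathbb{P})| : \mathbb{P} \in \mathcal{P}(I), |\gamma(\mathbb{P})| \le t \}$ is continuous on $(0, |I|]$. -/

import Mathlib

open MeasureTheory Set Filter Topology

noncomputable section

/-- The topological support of a Borel measure on `ℝ`. -/
def msupp (mu : Measure ℝ) : Set ℝ := {x | ∀ ε > 0, 0 < mu (Metric.ball x ε)}

/-- Infimum of the support. -/
def suppInf (mu : Measure ℝ) : ℝ := sInf (msupp mu)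

/-- Supremum of the support. -/
def suppSup (mu : Measure ℝ) : ℝ := sSup (msupp mu)

/-- `γ(P) = [inf supp P, sup supp P]`. -/
def gammaSet (mu : Measure ℝ) : Set ℝ := Icc (suppInf mu) (suppSup mu)

/-- `|γ(P)|`, the diameter of the support. -/
def gammaLen (mu : Measure ℝ) : ℝ := suppSup mu - suppInf mu

/-- `P ∈ 𝒫(I)`: a compactly supported Borel probability measure concentrated on `I`. -/
def IsCSP (I : Set ℝ) (mu : Measure ℝ) : Prop :=
  IsProbabilityMeasure mu ∧ mu Iᶜ = 0 ∧ IsCompact (closure (msupp mu))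

/-- `f ∈ CM(I)`: continuous and strictly monotone on `I`. -/
def CM (f : ℝ → ℝ) (I : Set ℝ) : Prop :=
  ContinuousOn f I ∧ (StrictMonoOn f I ∨ StrictAntiOn f I)

/-- The integral quasiarithmetic mean `𝒜_f(P) = f⁻¹(∫ f dP)` (inverse taken on `I`). -/
def QAM (f : ℝ → ℝ) (I : Set ℝ) (mu : Measure ℝ) : ℝ :=
  Function.invFunOn f I (∫ t, f t ∂mu)

/-- The Lebesgue σ-algebra on `ℝ` (completion of the Borel σ-algebra w.r.t. Lebesgue measure). -/
def Leb : MeasurableSpace ℝ where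
  MeasurableSet' s := NullMeasurableSet s (volume : Measure ℝ)
  measurableSet_empty := MeasurableSet.empty.nullMeasurableSet
  measurableSet_compl := fun _ hs => hs.compl
  measurableSet_iUnion := fun _ hf => NullMeasurableSet.iUnion hf

/-- An admissible family `(f_x)_{x∈[0,1]}`: each `f_x` continuous and strictly monotone on `I`,
and `(t,x) ↦ f_x(t)` measurable w.r.t. the product of the Borel σ-algebra and the
Lebesgue σ-algebra. -/
def Admissible (F : ℝ → ℝ → ℝ) (I : Set ℝ) : Prop :=
  (∀ x ∈ Icc (0:ℝ) 1, CM (F x) I) ∧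
  Measurable[(inferInstance : MeasurableSpace ℝ).prod Leb] (fun p : ℝ × ℝ => F p.2 p.1)

/-- `𝐀_𝓕(P)`: the distribution of `x ↦ 𝒜_{f_x}(P)` under Lebesgue measure on `[0,1]`. -/
def AF (F : ℝ → ℝ → ℝ) (I : Set ℝ) (mu : Measure ℝ) : Measure ℝ :=
  Measure.map (fun x => QAM (F x) I mu) ((volume : Measure ℝ).restrict (Icc 0 1))

/-- Iterates of `𝐀_𝓕`. -/
def AFiter (F : ℝ → ℝ → ℝ) (I : Set ℝ) (n : ℕ) (mu : Measure ℝ) : Measure ℝ :=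
  (AF F I)^[n] mu

/-- A mean on `𝒫(I)`: `M(P) ∈ γ(P)`. -/
def IsMean (I : Set ℝ) (M : Measure ℝ → ℝ) : Prop :=
  ∀ mu : Measure ℝ, IsCSP I mu → M mu ∈ gammaSet mu

/-- `M` is `𝐀_𝓕`-invariant: `M ∘ 𝐀_𝓕 = M` on `𝒫(I)`. -/
def IsInvariantMean (F : ℝ → ℝ → ℝ) (I : Set ℝ) (M : Measure ℝ → ℝ) : Prop :=
  ∀ mu : Measure ℝ, IsCSP I mu → M (AF F I mu) = M mu

/-- The lower invariant mean `𝓛_𝓕`. -/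
def LF (F : ℝ → ℝ → ℝ) (I : Set ℝ) (mu : Measure ℝ) : ℝ :=
  ⨆ n, suppInf (AFiter F I n mu)

/-- The upper invariant mean `𝓤_𝓕`. -/
def UF (F : ℝ → ℝ → ℝ) (I : Set ℝ) (mu : Measure ℝ) : ℝ :=
  ⨅ n, suppSup (AFiter F I n mu)

/-- Variance of a measure on `ℝ`. -/
def Var (mu : Measure ℝ) : ℝ := (∫ x, x ^ 2 ∂mu) - (∫ x, x ∂mu) ^ 2

/-- The two-point measure `θ·δ_x + (1-θ)·δ_y`. -/
def twoPt (x y θ : ℝ) : Measure ℝ :=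
  ENNReal.ofReal θ • Measure.dirac x + ENNReal.ofReal (1 - θ) • Measure.dirac y

lemma msupp_compl_null (mu : Measure ℝ) : mu (msupp mu)ᶜ = 0 := by
  apply measure_null_of_locally_null
  intro x hx
  simp only [msupp, mem_compl_iff, mem_setOf_eq, not_forall] at hx
  obtain ⟨ε, hε, h⟩ := hx
  refine ⟨Metric.ball x ε, mem_nhdsWithin_of_mem_nhds (Metric.ball_mem_nhds x hε), ?_⟩
  simpa using h

lemma msupp_subset_of_null {mu : Measure ℝ} {K : Set ℝ} (hK : IsClosed K)
    (h : mu Kᶜ = 0) : msupp mu ⊆ K := by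
  intro x hx
  by_contra hxK
  obtain ⟨ε, hε, hball⟩ := Metric.isOpen_iff.mp hK.isOpen_compl x hxK
  have h0 : mu (Metric.ball x ε) = 0 := measure_mono_null hball h
  exact absurd (hx ε hε) (by simp [h0])

lemma msupp_nonempty (mu : Measure ℝ) [IsProbabilityMeasure mu] : (msupp mu).Nonempty := by
  by_contra h
  rw [not_nonempty_iff_eq_empty] at h
  have := msupp_compl_null mu
  rw [h, compl_empty] at this
  simp [measure_univ] at this

lemma csp_facts {a b : ℝ} {mu : Measure ℝ} (hmu : IsCSP (Icc a b) mu) :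
    a ≤ suppInf mu ∧ suppSup mu ≤ b ∧ suppInf mu ≤ suppSup mu ∧
      mu (Icc (suppInf mu) (suppSup mu))ᶜ = 0 := by
  haveI := hmu.1
  have hsub : msupp mu ⊆ Icc a b := msupp_subset_of_null isClosed_Icc hmu.2.1
  have hne : (msupp mu).Nonempty := msupp_nonempty mu
  have hbdd : BddAbove (msupp mu) := ⟨b, fun x hx => (hsub hx).2⟩
  have hbddb : BddBelow (msupp mu) := ⟨a, fun x hx => (hsub hx).1⟩
  have h1 : a ≤ suppInf mu := le_csInf hne fun x hx => (hsub hx).1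
  have h2 : suppSup mu ≤ b := csSup_le hne fun x hx => (hsub hx).2
  have h3 : suppInf mu ≤ suppSup mu := by
    obtain ⟨x, hx⟩ := hne
    exact le_trans (csInf_le hbddb hx) (le_csSup hbdd hx)
  refine ⟨h1, h2, h3, ?_⟩
  have : msupp mu ⊆ Icc (suppInf mu) (suppSup mu) :=
    fun x hx => ⟨csInf_le hbddb hx, le_csSup hbdd hx⟩
  exact measure_mono_null (compl_subset_compl.mpr this) (msupp_compl_null mu)

lemma exists_ext {a b : ℝ} (hab : a ≤ b) {f : ℝ → ℝ} (hf : ContinuousOn f (Icc a b)) :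
    ∃ ft : ℝ → ℝ, Continuous ft ∧ (∀ x ∈ Icc a b, ft x = f x) ∧
      ∀ x, ft x ∈ f '' Icc a b := by
  refine ⟨Set.IccExtend hab ((Icc a b).restrict f), ?_, ?_, ?_⟩
  · exact Continuous.Icc_extend' (continuousOn_iff_continuous_restrict.mp hf)
  · intro x hx; rw [Set.IccExtend_of_mem hab _ hx]; rfl
  · intro x
    exact ⟨(Set.projIcc a b hab x : ℝ), (Set.projIcc a b hab x).2, rfl⟩

lemma integrable_ext {a b : ℝ} (hab : a ≤ b) {f : ℝ → ℝ} (hf : ContinuousOn f (Icc a b))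
    {ft : ℝ → ℝ} (hcont : Continuous ft) (hrange : ∀ x, ft x ∈ f '' Icc a b)
    (mu : Measure ℝ) [IsProbabilityMeasure mu] : Integrable ft mu := by
  have hK : IsCompact (f '' Icc a b) := isCompact_Icc.image_of_continuousOn hf
  obtain ⟨C, hC⟩ := hK.isBounded.exists_norm_le
  exact (integrable_const C).mono' hcont.aestronglyMeasurable
    (Filter.Eventually.of_forall fun x => hC _ (hrange x))

lemma integral_ext_mem {a b : ℝ} (hab : a ≤ b) {f : ℝ → ℝ} (hf : ContinuousOn f (Icc a b))
    {ft : ℝ → ℝ} (hcont : Continuous ft) (hrange : ∀ x, ft x ∈ f '' Icc a b)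
    (mu : Measure ℝ) [IsProbabilityMeasure mu] : (∫ x, ft x ∂mu) ∈ f '' Icc a b := by
  set K := f '' Icc a b with hKdef
  have hK : IsCompact K := isCompact_Icc.image_of_continuousOn hf
  have hKne : K.Nonempty := (nonempty_Icc.mpr hab).image f
  have hm : sInf K ∈ K := hK.sInf_mem hKne
  have hM : sSup K ∈ K := hK.sSup_mem hKne
  have hint : Integrable ft mu := integrable_ext hab hf hcont hrange mu
  have h1 : sInf K ≤ ∫ x, ft x ∂mu := by
    have := integral_mono (integrable_const (sInf K)) hint
      (fun x => csInf_le hK.isBounded.bddBelow (hrange x))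
    simpa using this
  have h2 : (∫ x, ft x ∂mu) ≤ sSup K := by
    have := integral_mono hint (integrable_const (sSup K))
      (fun x => le_csSup hK.isBounded.bddAbove (hrange x))
    simpa using this
  have hconn : OrdConnected K :=
    (isPreconnected_Icc.image f hf).ordConnected
  exact hconn.out hm hM ⟨h1, h2⟩

lemma integral_congr_ext {a b : ℝ} {f : ℝ → ℝ} {ft : ℝ → ℝ}
    (heq : ∀ x ∈ Icc a b, ft x = f x) {mu : Measure ℝ} (hmu : mu (Icc a b)ᶜ = 0) :
    (∫ x, f x ∂mu) = ∫ x, ft x ∂mu := by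
  apply integral_congr_ae
  have : {x | ¬ f x = ft x} ⊆ (Icc a b)ᶜ := by
    intro x hx
    by_contra hxI
    rw [notMem_compl_iff] at hxI
    exact hx (heq x hxI).symm
  exact (measure_mono_null this hmu)

lemma QAM_eq_inv {a b : ℝ} {f : ℝ → ℝ} {ft : ℝ → ℝ}
    (heq : ∀ x ∈ Icc a b, ft x = f x) {mu : Measure ℝ} (hmu : mu (Icc a b)ᶜ = 0) :
    QAM f (Icc a b) mu = Function.invFunOn f (Icc a b) (∫ x, ft x ∂mu) := by
  rw [QAM, integral_congr_ext heq hmu]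

lemma CM.injOn {f : ℝ → ℝ} {I : Set ℝ} (hf : CM f I) : Set.InjOn f I :=
  hf.2.elim (fun h => h.injOn) (fun h => h.injOn)

lemma invFunOn_uc {a b : ℝ} (hab : a ≤ b) {f : ℝ → ℝ} (hf : CM f (Icc a b)) :
    UniformContinuousOn (Function.invFunOn f (Icc a b)) (f '' Icc a b) := by
  set K := f '' Icc a b with hKdef
  have hK : IsCompact K := isCompact_Icc.image_of_continuousOn hf.1
  haveI : CompactSpace (Icc a b) := isCompact_iff_compactSpace.mp isCompact_Icc
  have hinj := hf.injOn
  have hbij : Function.Bijective (fun x : Icc a b => (⟨f x, Set.mem_image_of_mem f x.2⟩ : K)) := by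
    constructor
    · intro x y h
      exact Subtype.ext (hinj x.2 y.2 (congrArg Subtype.val h))
    · rintro ⟨y, hy⟩
      obtain ⟨x, hx, hfx⟩ := hy
      exact ⟨⟨x, hx⟩, Subtype.ext hfx⟩
  set e : Icc a b ≃ K := Equiv.ofBijective _ hbij with hedef
  have hecont : Continuous e :=
    Continuous.subtype_mk (continuousOn_iff_continuous_restrict.mp hf.1) _
  have h := hecont.homeoOfEquivCompactToT2 (f := e)
  have hcont : ContinuousOn (Function.invFunOn f (Icc a b)) K := by
    rw [continuousOn_iff_continuous_restrict]
    have : K.restrict (Function.invFunOn f (Icc a b)) =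
        Subtype.val ∘ (Continuous.homeoOfEquivCompactToT2 (f := e) hecont).symm := by
      funext y
      have hy : ∃ x ∈ Icc a b, f x = (y : ℝ) := by
        obtain ⟨x, hx, hfx⟩ := y.2; exact ⟨x, hx, hfx⟩
      have h1 : Function.invFunOn f (Icc a b) (y : ℝ) ∈ Icc a b := Function.invFunOn_mem hy
      have h2 : f (Function.invFunOn f (Icc a b) (y : ℝ)) = (y : ℝ) := Function.invFunOn_eq hy
      set x := (Continuous.homeoOfEquivCompactToT2 (f := e) hecont).symm y with hxdef
      have hex : e x = y := (Continuous.homeoOfEquivCompactToT2 (f := e) hecont).apply_symm_apply y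
      have h3 : f (x : ℝ) = (y : ℝ) := congrArg Subtype.val hex
      exact hinj h1 x.2 (h2.trans h3.symm)
    rw [show K.domRestrict (Function.invFunOn f (Icc a b)) = _ from this]
    exact continuous_subtype_val.comp
      (Continuous.homeoOfEquivCompactToT2 (f := e) hecont).symm.continuous
  exact hK.uniformContinuousOn_of_continuous hcont

lemma contract {a b : ℝ} {mu : Measure ℝ} (hmu : IsCSP (Icc a b) mu)
    {t s : ℝ} (ht : 0 < t) (hts : t ≤ s) (hlen : gammaLen mu ≤ s) :
    ∃ nu : Measure ℝ, IsCSP (Icc a b) nu ∧ gammaLen nu ≤ t ∧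
      ∃ φ : ℝ → ℝ, Measurable φ ∧ nu = Measure.map φ mu ∧
        (∀ᵐ x ∂mu, x ∈ Icc a b ∧ φ x ∈ Icc a b ∧ |φ x - x| ≤ s - t) := by
  haveI := hmu.1
  obtain ⟨hac, hdb, hcd, hcompl⟩ := csp_facts hmu
  set c := suppInf mu
  set d := suppSup mu
  have hs : 0 < s := lt_of_lt_of_le ht hts
  set r : ℝ := t / s with hrdef
  have hr0 : 0 < r := div_pos ht hs
  have hr1 : r ≤ 1 := (div_le_one hs).mpr hts
  set φ : ℝ → ℝ := fun x => c + r * (x - c) with hφdef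
  have hφm : Measurable φ := by measurability
  have hL : d - c ≤ s := hlen
  -- key pointwise facts
  have hkey : ∀ x ∈ Icc c d, x ∈ Icc a b ∧ φ x ∈ Icc a b ∧ |φ x - x| ≤ s - t := by
    intro x hx
    have hxa : a ≤ x := le_trans hac hx.1
    have hxb : x ≤ b := le_trans hx.2 hdb
    have h1 : c ≤ φ x := by
      have : 0 ≤ r * (x - c) := mul_nonneg hr0.le (sub_nonneg.mpr hx.1)
      simp only [hφdef]; linarith
    have h2 : φ x ≤ x := by
      have : r * (x - c) ≤ 1 * (x - c) :=
        mul_le_mul_of_nonneg_right hr1 (sub_nonneg.mpr hx.1)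
      simp only [hφdef]; linarith
    have hφab : φ x ∈ Icc a b := ⟨le_trans hac h1, le_trans h2 hxb⟩
    refine ⟨⟨hxa, hxb⟩, hφab, ?_⟩
    have h3 : x - φ x = (1 - r) * (x - c) := by simp only [hφdef]; ring
    have h4 : (1 - r) * (x - c) ≤ (1 - r) * s := by
      have hxc : x - c ≤ s := by
        have := hx.2; linarith
      exact mul_le_mul_of_nonneg_left hxc (by linarith)
    have h5 : (1 - r) * s = s - t := by
      rw [sub_mul, one_mul, hrdef, div_mul_cancel₀ t hs.ne']
    rw [abs_sub_comm, abs_of_nonneg (by linarith [h2] : 0 ≤ x - φ x), h3]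
    linarith [h4, h5.le]
  have hae : ∀ᵐ x ∂mu, x ∈ Icc c d := by
    rw [ae_iff]
    exact measure_mono_null (fun x hx => by simpa using hx) hcompl
  set nu := Measure.map φ mu with hnudef
  haveI hnuP : IsProbabilityMeasure nu := Measure.isProbabilityMeasure_map hφm.aemeasurable
  -- nu concentrated on Icc c (c + r * (d - c)) ⊆ Icc a b
  have himg : ∀ x ∈ Icc c d, φ x ∈ Icc c (c + r * (d - c)) := by
    intro x hx
    constructor
    · have : 0 ≤ r * (x - c) := mul_nonneg hr0.le (sub_nonneg.mpr hx.1)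
      simp only [hφdef]; linarith
    · have : r * (x - c) ≤ r * (d - c) :=
        mul_le_mul_of_nonneg_left (by linarith [hx.2]) hr0.le
      simp only [hφdef]; linarith
  have hnu_conc : nu (Icc c (c + r * (d - c)))ᶜ = 0 := by
    rw [hnudef, Measure.map_apply hφm isClosed_Icc.measurableSet.compl]
    refine measure_mono_null ?_ hcompl
    intro x hx
    simp only [mem_preimage, mem_compl_iff] at hx ⊢
    exact fun hxcd => hx (himg x hxcd)
  have hsubI : Icc c (c + r * (d - c)) ⊆ Icc a b := by
    apply Icc_subset_Icc hac
    have h1 : r * (d - c) ≤ d - c :=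
      mul_le_mul_of_nonneg_right hr1 (by linarith) |>.trans_eq (one_mul _)
    linarith
  have hnu_ab : nu (Icc a b)ᶜ = 0 :=
    measure_mono_null (compl_subset_compl.mpr hsubI) hnu_conc
  have hmsupp : msupp nu ⊆ Icc c (c + r * (d - c)) :=
    msupp_subset_of_null isClosed_Icc hnu_conc
  have hcpt : IsCompact (closure (msupp nu)) :=
    isCompact_Icc.of_isClosed_subset isClosed_closure
      (closure_minimal hmsupp isClosed_Icc)
  have hglen : gammaLen nu ≤ t := by
    have hne : (msupp nu).Nonempty := msupp_nonempty nu
    have hbdd : BddAbove (msupp nu) := ⟨c + r * (d - c), fun x hx => (hmsupp hx).2⟩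
    have hbddb : BddBelow (msupp nu) := ⟨c, fun x hx => (hmsupp hx).1⟩
    have h1 : suppSup nu ≤ c + r * (d - c) := csSup_le hne fun x hx => (hmsupp hx).2
    have h2 : c ≤ suppInf nu := le_csInf hne fun x hx => (hmsupp hx).1
    have h3 : r * (d - c) ≤ r * s := mul_le_mul_of_nonneg_left hL hr0.le
    have h4 : r * s = t := div_mul_cancel₀ t hs.ne'
    simp only [gammaLen]
    linarith
  exact ⟨nu, ⟨hnuP, hnu_ab, hcpt⟩, hglen, φ, hφm, rfl,
    hae.mono fun x hx => hkey x hx⟩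

lemma msupp_dirac (a : ℝ) : msupp (Measure.dirac a) = {a} := by
  ext x
  simp only [msupp, mem_setOf_eq, mem_singleton_iff]
  constructor
  · intro h
    by_contra hxa
    have hd : (0:ℝ) < |x - a| := abs_pos.mpr (sub_ne_zero.mpr hxa)
    have := h _ hd
    rw [Measure.dirac_apply' _ measurableSet_ball] at this
    have : a ∉ Metric.ball x |x - a| := by
      simp [Real.dist_eq, abs_sub_comm]
    simp_all [Set.indicator_of_notMem]
  · rintro rfl ε hε
    rw [Measure.dirac_apply' _ measurableSet_ball]
    simp [Metric.mem_ball, hε]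

lemma dirac_csp {a b : ℝ} (hab : a ≤ b) :
    IsCSP (Icc a b) (Measure.dirac a) ∧ gammaLen (Measure.dirac a) = 0 := by
  constructor
  · refine ⟨Measure.dirac.isProbabilityMeasure, ?_, ?_⟩
    · rw [Measure.dirac_apply' _ isClosed_Icc.measurableSet.compl]
      simp [Set.indicator_of_notMem, hab]
    · rw [msupp_dirac, closure_singleton]; exact isCompact_singleton
  · simp [gammaLen, suppInf, suppSup, msupp_dirac]

lemma qam_close {a b : ℝ} {f ft : ℝ → ℝ} (hf : ContinuousOn f (Icc a b))
    (hftc : Continuous ft) (hrange : ∀ x, ft x ∈ f '' Icc a b)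
    {mu : Measure ℝ} [IsProbabilityMeasure mu]
    {φ : ℝ → ℝ} (hφm : Measurable φ)
    {η : ℝ} (hbd : ∀ᵐ x ∂mu, ‖ft (φ x) - ft x‖ ≤ η) :
    dist (∫ x, ft x ∂(Measure.map φ mu)) (∫ x, ft x ∂mu) ≤ η := by
  have hK : IsCompact (f '' Icc a b) := isCompact_Icc.image_of_continuousOn hf
  obtain ⟨C, hC⟩ := hK.isBounded.exists_norm_le
  have hint1 : Integrable ft mu := (integrable_const C).mono' hftc.aestronglyMeasurable
    (Filter.Eventually.of_forall fun x => hC _ (hrange x))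
  have hint2 : Integrable (fun x => ft (φ x)) mu :=
    (integrable_const C).mono' (hftc.measurable.comp hφm).aestronglyMeasurable
      (Filter.Eventually.of_forall fun x => hC _ (hrange _))
  rw [integral_map hφm.aemeasurable hftc.aestronglyMeasurable]
  rw [Real.dist_eq, ← integral_sub hint2 hint1]
  calc |∫ x, (ft (φ x) - ft x) ∂mu| ≤ η * (mu Set.univ).toReal := by
        rw [← Real.norm_eq_abs]
        exact norm_integral_le_of_norm_le_const hbd
    _ = η := by simp

lemma QAM_mem {a b : ℝ} (hab : a ≤ b) {f : ℝ → ℝ} (hf : CM f (Icc a b))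
    {mu : Measure ℝ} (hmu : IsCSP (Icc a b) mu) : QAM f (Icc a b) mu ∈ Icc a b := by
  haveI := hmu.1
  obtain ⟨ft, hc, heq, hr⟩ := exists_ext hab hf.1
  rw [QAM_eq_inv heq hmu.2.1]
  obtain ⟨x, hx, hfx⟩ := integral_ext_mem hab hf.1 hc hr mu
  exact Function.invFunOn_mem ⟨x, hx, hfx⟩

theorem stmt2 (a b : ℝ) (hab : a < b) (f g : ℝ → ℝ)
    (hf : CM f (Icc a b)) (hg : CM g (Icc a b)) :
    ContinuousOn (fun t : ℝ =>
      sSup {d : ℝ | ∃ mu : Measure ℝ, IsCSP (Icc a b) mu ∧ gammaLen mu ≤ t ∧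
        d = |QAM f (Icc a b) mu - QAM g (Icc a b) mu|}) (Ioc 0 (b - a)) := by
  set I := Icc a b with hIdef
  set S : ℝ → Set ℝ := fun t => {d : ℝ | ∃ mu : Measure ℝ, IsCSP (Icc a b) mu ∧
    gammaLen mu ≤ t ∧ d = |QAM f (Icc a b) mu - QAM g (Icc a b) mu|} with hSdef
  show ContinuousOn (fun t => sSup (S t)) (Ioc 0 (b - a))
  obtain ⟨ft, hftc, hfteq, hftr⟩ := exists_ext hab.le hf.1
  obtain ⟨gt, hgtc, hgteq, hgtr⟩ := exists_ext hab.le hg.1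
  -- nonemptiness
  have hSne : ∀ t, 0 ≤ t → (S t).Nonempty := by
    intro t ht
    obtain ⟨hcsp, hlen⟩ := dirac_csp (a := a) (b := b) hab.le
    exact ⟨_, Measure.dirac a, hcsp, by rw [hlen]; exact ht, rfl⟩
  -- boundedness
  have hSbdd : ∀ t, BddAbove (S t) := by
    intro t
    refine ⟨b - a, ?_⟩
    rintro d ⟨mu, hmu, -, rfl⟩
    have h1 := QAM_mem hab.le hf hmu
    have h2 := QAM_mem hab.le hg hmu
    rw [abs_sub_le_iff]
    constructor <;> [skip; skip] <;>
      · obtain ⟨hx1, hx2⟩ := h1; obtain ⟨hy1, hy2⟩ := h2; linarith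
  -- monotonicity
  have hmono : ∀ t t', 0 ≤ t → t ≤ t' → sSup (S t) ≤ sSup (S t') := by
    intro t t' ht htt'
    refine csSup_le_csSup (hSbdd t') (hSne t ht) ?_
    rintro d ⟨mu, h1, h2, h3⟩
    exact ⟨mu, h1, h2.trans htt', h3⟩
  -- key uniform estimate
  have hkey : ∀ ε > (0:ℝ), ∃ δ > (0:ℝ), ∀ t s : ℝ, 0 < t → t ≤ s → s ≤ b - a →
      s - t < δ → sSup (S s) ≤ sSup (S t) + ε := by
    intro ε hε
    obtain ⟨δ₁f, hδ₁f, Hf⟩ := (Metric.uniformContinuousOn_iff).mp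
      (invFunOn_uc hab.le hf) (ε / 4) (by linarith)
    obtain ⟨δ₁g, hδ₁g, Hg⟩ := (Metric.uniformContinuousOn_iff).mp
      (invFunOn_uc hab.le hg) (ε / 4) (by linarith)
    obtain ⟨δ₂f, hδ₂f, Hf2⟩ := (Metric.uniformContinuousOn_iff).mp
      (isCompact_Icc.uniformContinuousOn_of_continuous hf.1) (δ₁f / 2) (by linarith)
    obtain ⟨δ₂g, hδ₂g, Hg2⟩ := (Metric.uniformContinuousOn_iff).mp
      (isCompact_Icc.uniformContinuousOn_of_continuous hg.1) (δ₁g / 2) (by linarith)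
    refine ⟨min δ₂f δ₂g, lt_min hδ₂f hδ₂g, ?_⟩
    intro t s ht hts hsba hst
    apply csSup_le (hSne s (le_trans ht.le hts))
    rintro d ⟨mu, hmu, hlen, rfl⟩
    haveI := hmu.1
    obtain ⟨nu, hnu, hnulen, φ, hφm, hnueq, hae⟩ := contract hmu ht hts hlen
    haveI := hnu.1
    have haef : ∀ᵐ x ∂mu, ‖ft (φ x) - ft x‖ ≤ δ₁f / 2 := by
      refine hae.mono ?_
      rintro x ⟨hx, hφx, hd⟩
      have hdist : dist (φ x) x < δ₂f := by
        rw [Real.dist_eq]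
        exact lt_of_le_of_lt hd (lt_of_lt_of_le hst (min_le_left _ _))
      have := Hf2 _ hφx _ hx hdist
      rw [hfteq _ hφx, hfteq _ hx, Real.norm_eq_abs, ← Real.dist_eq]
      exact this.le
    have haeg : ∀ᵐ x ∂mu, ‖gt (φ x) - gt x‖ ≤ δ₁g / 2 := by
      refine hae.mono ?_
      rintro x ⟨hx, hφx, hd⟩
      have hdist : dist (φ x) x < δ₂g := by
        rw [Real.dist_eq]
        exact lt_of_le_of_lt hd (lt_of_lt_of_le hst (min_le_right _ _))
      have := Hg2 _ hφx _ hx hdist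
      rw [hgteq _ hφx, hgteq _ hx, Real.norm_eq_abs, ← Real.dist_eq]
      exact this.le
    have hdf : dist (∫ x, ft x ∂nu) (∫ x, ft x ∂mu) < δ₁f := by
      rw [hnueq]
      exact lt_of_le_of_lt (qam_close hf.1 hftc hftr hφm haef) (by linarith)
    have hdg : dist (∫ x, gt x ∂nu) (∫ x, gt x ∂mu) < δ₁g := by
      rw [hnueq]
      exact lt_of_le_of_lt (qam_close hg.1 hgtc hgtr hφm haeg) (by linarith)
    have hQf : dist (QAM f (Icc a b) nu) (QAM f (Icc a b) mu) < ε / 4 := by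
      rw [QAM_eq_inv hfteq hnu.2.1, QAM_eq_inv hfteq hmu.2.1]
      exact Hf _ (integral_ext_mem hab.le hf.1 hftc hftr nu)
        _ (integral_ext_mem hab.le hf.1 hftc hftr mu) hdf
    have hQg : dist (QAM g (Icc a b) nu) (QAM g (Icc a b) mu) < ε / 4 := by
      rw [QAM_eq_inv hgteq hnu.2.1, QAM_eq_inv hgteq hmu.2.1]
      exact Hg _ (integral_ext_mem hab.le hg.1 hgtc hgtr nu)
        _ (integral_ext_mem hab.le hg.1 hgtc hgtr mu) hdg
    have hmem : |QAM f (Icc a b) nu - QAM g (Icc a b) nu| ∈ S t := ⟨nu, hnu, hnulen, rfl⟩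
    have hle : |QAM f (Icc a b) nu - QAM g (Icc a b) nu| ≤ sSup (S t) :=
      le_csSup (hSbdd t) hmem
    have htri : |QAM f (Icc a b) mu - QAM g (Icc a b) mu| ≤
        |QAM f (Icc a b) nu - QAM g (Icc a b) nu| + ε / 2 := by
      have h4 := dist_triangle4 (QAM f (Icc a b) mu) (QAM f (Icc a b) nu)
        (QAM g (Icc a b) nu) (QAM g (Icc a b) mu)
      rw [dist_comm (QAM f (Icc a b) nu) (QAM f (Icc a b) mu)] at hQf
      simp only [Real.dist_eq] at h4 hQf hQg
      linarith
    linarith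
  -- conclude continuity
  intro t₀ ht₀
  apply Metric.continuousWithinAt_iff.mpr
  intro ε hε
  obtain ⟨δ, hδ, Hδ⟩ := hkey (ε / 2) (by linarith)
  refine ⟨δ, hδ, ?_⟩
  intro t ht hdist
  rw [Real.dist_eq] at hdist ⊢
  rcases le_total t t₀ with h | h
  · have hU : sSup (S t₀) ≤ sSup (S t) + ε / 2 := by
      refine Hδ t t₀ ht.1 h ht₀.2 ?_
      calc t₀ - t = -(t - t₀) := by ring
        _ ≤ |t - t₀| := neg_le_abs _
        _ < δ := hdist
    have hL : sSup (S t) ≤ sSup (S t₀) := hmono t t₀ ht.1.le h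
    rw [abs_lt]; constructor <;> linarith
  · have hU : sSup (S t) ≤ sSup (S t₀) + ε / 2 := by
      refine Hδ t₀ t ht₀.1 h ht.2 ?_
      calc t - t₀ ≤ |t - t₀| := le_abs_self _
        _ < δ := hdist
    have hL : sSup (S t₀) ≤ sSup (S t) := hmono t₀ t ht₀.1.le h
    rw [abs_lt]; constructor <;> linarith
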